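/- Let n ≥ 4 be an even integer and k ≥ 1. Suppose H₁ and H₂ are affine hyperplanes in ℝ^{2k} such that the origin lies on neither, no point of P lies on H₁ ∪ H₂, and for every p ∈ P the segment between the origin and p meets H₁ ∪ H₂. Then there exists (u_1,…,u_k) ∈ {1,…,n}^k such that {p ∈ P : the segment from the origin to p meets H₁} = P(u_1,…,u_k) and {p ∈ P : the segment from the origin to p meets H₂} = P(u'_1,…,u'_k). -/

import Mathlib

open scoped RealInnerProductSpace
open Real

/-- The scaffolding point `p_{iu}` in `ℝ^{2k}`: its `i`-th coordinate pair is
`(cos((u−1)·2π/n), sin((u−1)·2π/n))` and its other coordinates are `0`. -/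
noncomputable def scafPt (n k : ℕ) (i : Fin k) (u : ℕ) :
    EuclideanSpace ℝ (Fin (2 * k)) :=
  (WithLp.equiv 2 (Fin (2 * k) → ℝ)).symm fun idx =>
    if (idx : ℕ) = 2 * (i : ℕ) then Real.cos (((u : ℝ) - 1) * (2 * Real.pi) / n)
    else if (idx : ℕ) = 2 * (i : ℕ) + 1 then Real.sin (((u : ℝ) - 1) * (2 * Real.pi) / n)
    else 0

/-- The scaffolding point set `P = {p_{iu} : 1 ≤ i ≤ k, 1 ≤ u ≤ n}`. -/
noncomputable def scafSet (n k : ℕ) : Set (EuclideanSpace ℝ (Fin (2 * k))) :=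
  {x | ∃ i : Fin k, ∃ u ∈ Finset.Icc 1 n, x = scafPt n k i u}

/-- The antipodal partner `u' ∈ {1,…,n}` of `u ∈ {1,…,n}`: the unique element of
`{1,…,n}` congruent to `u + n/2` modulo `n`. -/
def antip (n u : ℕ) : ℕ := (u - 1 + n / 2) % n + 1

/-- The almost antipodal partner `ū ∈ {1,…,n}` of `u ∈ {1,…,n}`: the unique element of
`{1,…,n}` congruent to `u + n/2 + 1` modulo `n`. -/
def almostAntip (n u : ℕ) : ℕ := (u - 1 + n / 2 + 1) % n + 1

/-- The half of the scaffolding set selected by a tuple `(u_1,…,u_k) ∈ {1,…,n}^k`: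
`P(u_1,…,u_k) = {p_{it} : 1 ≤ i ≤ k, t ∈ {1,…,n}, t ≡ u_i − s (mod n)` for some
`s ∈ {0,…,n/2−1}}`. -/
noncomputable def scafHalf (n k : ℕ) (U : Fin k → ℕ) :
    Set (EuclideanSpace ℝ (Fin (2 * k))) :=
  {x | ∃ i : Fin k, ∃ t ∈ Finset.Icc 1 n,
    (∃ s < n / 2, t + s ≡ U i [MOD n]) ∧ x = scafPt n k i t}

/-- The affine hyperplane `{x : ⟪a, x⟫ = b}`. -/
def hyp {k : ℕ} (a : EuclideanSpace ℝ (Fin (2 * k))) (b : ℝ) :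
    Set (EuclideanSpace ℝ (Fin (2 * k))) := {x | ⟪a, x⟫ = b}

-- ===== helper lemmas (verified) =====
lemma arc_lemma (A B θ₁ θ₂ θ : ℝ) (h1 : θ₁ ≤ θ) (h2 : θ ≤ θ₂) (h3 : θ₂ - θ₁ < π)
    (f1 : 1 < A * cos θ₁ + B * sin θ₁) (f2 : 1 < A * cos θ₂ + B * sin θ₂) :
    1 < A * cos θ + B * sin θ := by
  rcases eq_or_lt_of_le (h1.trans h2) with he | hlt
  · have : θ = θ₁ := le_antisymm (he ▸ h2) h1
    rwa [this]
  · have hD : 0 < sin (θ₂ - θ₁) := sin_pos_of_pos_of_lt_pi (by linarith) h3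
    have hsa : 0 ≤ sin (θ₂ - θ) :=
      sin_nonneg_of_nonneg_of_le_pi (by linarith) (by linarith)
    have hsb : 0 ≤ sin (θ - θ₁) :=
      sin_nonneg_of_nonneg_of_le_pi (by linarith) (by linarith)
    have hsum : sin (θ₂ - θ₁) ≤ sin (θ₂ - θ) + sin (θ - θ₁) := by
      have := sin_add (θ₂ - θ) (θ - θ₁)
      have c1 := cos_le_one (θ₂ - θ)
      have c2 := cos_le_one (θ - θ₁)
      have e : θ₂ - θ + (θ - θ₁) = θ₂ - θ₁ := by ring
      rw [e] at this
      nlinarith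
    have e1 : sin (θ₂ - θ) * cos θ₁ + sin (θ - θ₁) * cos θ₂ = sin (θ₂ - θ₁) * cos θ := by
      rw [sin_sub, sin_sub, sin_sub]; ring
    have e2 : sin (θ₂ - θ) * sin θ₁ + sin (θ - θ₁) * sin θ₂ = sin (θ₂ - θ₁) * sin θ := by
      rw [sin_sub, sin_sub, sin_sub]; ring
    have key : sin (θ₂ - θ₁) * (A * cos θ + B * sin θ)
        = sin (θ₂ - θ) * (A * cos θ₁ + B * sin θ₁)
          + sin (θ - θ₁) * (A * cos θ₂ + B * sin θ₂) := by
      linear_combination (-A) * e1 + (-B) * e2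
    rcases lt_or_eq_of_le hsa with hsa' | hsa'
    · nlinarith
    · nlinarith

lemma meets_iff {k : ℕ} (c p : EuclideanSpace ℝ (Fin (2 * k)))
    (hp : ⟪c, p⟫ ≠ 1) :
    (segment ℝ 0 p ∩ {x | ⟪c, x⟫ = 1}).Nonempty ↔ 1 < ⟪c, p⟫ := by
  constructor
  · rintro ⟨x, hx, hx1⟩
    rw [segment_eq_image] at hx
    obtain ⟨t, ht, rfl⟩ := hx
    simp only [Set.mem_Icc] at ht
    simp only [Set.mem_setOf_eq, smul_zero, zero_add, real_inner_smul_right] at hx1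
    have ht0 : 0 < t := by
      rcases lt_or_eq_of_le ht.1 with h | h
      · exact h
      · exfalso; rw [← h] at hx1; simp at hx1
    have hg0 : 0 < ⟪c, p⟫ := by nlinarith
    rcases lt_or_eq_of_le ht.2 with h | h
    · nlinarith
    · exfalso; rw [h] at hx1; simp at hx1; exact hp hx1
  · intro hg
    have hg0 : 0 < ⟪c, p⟫ := by linarith
    refine ⟨(⟪c, p⟫)⁻¹ • p, ?_, ?_⟩
    · rw [segment_eq_image]
      exact ⟨(⟪c, p⟫)⁻¹, by
        constructor
        · positivity
        · rw [inv_le_one_iff₀]; right; linarith, by simp⟩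
    · simp only [Set.mem_setOf_eq, real_inner_smul_right]
      exact inv_mul_cancel₀ (ne_of_gt hg0)

lemma inner_scafPt (n k : ℕ) (i : Fin k) (u : ℕ) (a : EuclideanSpace ℝ (Fin (2 * k))) :
    ⟪a, scafPt n k i u⟫ =
      a ⟨2 * (i : ℕ), by omega⟩ * Real.cos (((u : ℝ) - 1) * (2 * Real.pi) / n)
      + a ⟨2 * (i : ℕ) + 1, by omega⟩ * Real.sin (((u : ℝ) - 1) * (2 * Real.pi) / n) := by
  classical
  have hi := i.2
  set c := Real.cos (((u : ℝ) - 1) * (2 * Real.pi) / n)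
  set s := Real.sin (((u : ℝ) - 1) * (2 * Real.pi) / n)
  set j₀ : Fin (2 * k) := ⟨2 * (i : ℕ), by omega⟩
  set j₁ : Fin (2 * k) := ⟨2 * (i : ℕ) + 1, by omega⟩
  rw [PiLp.inner_apply]
  simp only [RCLike.inner_apply]
  have happ : ∀ idx : Fin (2 * k), scafPt n k i u idx =
      if (idx : ℕ) = 2 * (i : ℕ) then c else if (idx : ℕ) = 2 * (i : ℕ) + 1 then s else 0 :=
    fun idx => rfl
  have hterm : ∀ idx : Fin (2 * k),
      (starRingEnd ℝ) (a idx) * scafPt n k i u idx =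
        (if idx = j₀ then a j₀ * c else 0) + (if idx = j₁ then a j₁ * s else 0) := by
    intro idx
    rw [happ idx]
    rcases eq_or_ne idx j₀ with h0 | h0
    · subst h0
      simp [j₀, j₁, Fin.ext_iff]
    · rcases eq_or_ne idx j₁ with h1 | h1
      · subst h1
        simp [j₀, j₁, Fin.ext_iff]
      · have h0' : (idx : ℕ) ≠ 2 * (i : ℕ) := by
          intro h; exact h0 (Fin.ext h)
        have h1' : (idx : ℕ) ≠ 2 * (i : ℕ) + 1 := by
          intro h; exact h1 (Fin.ext h)
        simp [h0, h1, h0', h1']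
  rw [Finset.sum_congr rfl fun idx _ => (mul_comm _ _).trans (hterm idx), Finset.sum_add_distrib,
    Finset.sum_ite_eq' Finset.univ j₀ (fun _ => a j₀ * c),
    Finset.sum_ite_eq' Finset.univ j₁ (fun _ => a j₁ * s)]
  simp

lemma circle_windows (h : ℕ) (hh : 2 ≤ h) (Q Q' : ℤ → Prop)
    (hmod : ∀ m m' : ℤ, m ≡ m' [ZMOD (2 * h : ℤ)] → (Q m ↔ Q m'))
    (hcov : ∀ m : ℤ, Q m ∨ Q' m)
    (hanti : ∀ m : ℤ, ¬(Q m ∧ Q (m + h)))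
    (hanti' : ∀ m : ℤ, ¬(Q' m ∧ Q' (m + h)))
    (hconv' : ∀ m d e : ℤ, 0 ≤ e → e ≤ d → d < h → Q' m → Q' (m + d) → Q' (m + e)) :
    ∃ u₁ : ℤ,
      (∀ m : ℤ, Q m ↔ ∃ s : ℤ, 0 ≤ s ∧ s < h ∧ m ≡ u₁ - s [ZMOD (2 * h : ℤ)]) ∧
      (∀ m : ℤ, Q' m ↔ ∃ s : ℤ, 0 ≤ s ∧ s < h ∧ m ≡ u₁ + h - s [ZMOD (2 * h : ℤ)]) := by
  classical
  have hN : (0 : ℤ) < 2 * h := by positivity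
  have hnot : ∀ m : ℤ, Q' m ↔ ¬ Q m := by
    intro m
    constructor
    · intro hq' hq
      have h1 : ¬ Q (m + h) := fun hq2 => hanti m ⟨hq, hq2⟩
      exact hanti' m ⟨hq', (hcov (m + h)).resolve_left h1⟩
    · intro hq; exact (hcov m).resolve_left hq
  have hxor : ∀ m : ℤ, ¬ Q m ↔ Q (m + h) := by
    intro m
    constructor
    · intro hq
      by_contra hq2
      exact hanti' m ⟨(hnot m).mpr hq, (hnot (m + h)).mpr hq2⟩
    · intro hq2 hq; exact hanti m ⟨hq, hq2⟩
  have hex : ∃ m₀ : ℤ, Q m₀ := by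
    by_cases h0 : Q 0
    · exact ⟨0, h0⟩
    · exact ⟨(0 : ℤ) + h, (hxor 0).mp h0⟩
  obtain ⟨m₀, hm₀⟩ := hex
  have htrans : ∃ u₁ : ℤ, Q u₁ ∧ ¬ Q (u₁ + 1) := by
    by_contra hcon
    push_neg at hcon
    have hall : ∀ s : ℕ, Q (m₀ + s) := by
      intro s
      induction s with
      | zero => simpa using hm₀
      | succ t ih =>
        have := hcon (m₀ + t) ih
        push_cast
        rw [← add_assoc]
        exact this
    have h1 := hall h
    exact hanti m₀ ⟨hm₀, h1⟩
  obtain ⟨u₁, hu₁, hu₁'⟩ := htrans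
  have hblock : ∀ s : ℤ, 0 ≤ s → s < h → Q (u₁ - s) := by
    intro s hs0 hsh
    by_contra hq
    have hq1' : Q' (u₁ + 1) := (hnot _).mpr hu₁'
    have hqs' : Q' (u₁ - s) := (hnot _).mpr hq
    rcases eq_or_lt_of_le (by omega : s + 1 ≤ (h : ℤ)) with he | hlt
    · have e : u₁ + 1 = (u₁ - s) + h := by omega
      rw [e] at hq1'
      exact hanti' (u₁ - s) ⟨hqs', hq1'⟩
    · have e : u₁ + 1 = (u₁ - s) + (s + 1) := by ring
      rw [e] at hq1'
      have := hconv' (u₁ - s) (s + 1) s hs0 (by omega) hlt hqs' hq1'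
      have e2 : (u₁ - s) + s = u₁ := by ring
      rw [e2] at this
      exact (hnot u₁).mp this hu₁
  refine ⟨u₁, ?_, ?_⟩
  · intro m
    constructor
    · intro hq
      set s := (u₁ - m) % (2 * h) with hs
      have hs0 : 0 ≤ s := Int.emod_nonneg _ (by omega)
      have hlt2 : s < 2 * h := Int.emod_lt_of_pos _ hN
      have hcong : m ≡ u₁ - s [ZMOD (2 * h : ℤ)] := by
        rw [Int.modEq_iff_dvd]
        refine ⟨(u₁ - m) / (2 * h), ?_⟩
        have hed := Int.emod_def (u₁ - m) (2 * h)
        rw [hs]; linarith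
      refine ⟨s, hs0, ?_, hcong⟩
      by_contra hge
      push_neg at hge
      have hQb : Q (u₁ - (s - h)) := hblock (s - h) (by omega) (by omega)
      have e : u₁ - (s - h) = (u₁ - s) + h := by ring
      rw [e] at hQb
      exact hanti (u₁ - s) ⟨(hmod m (u₁ - s) hcong).mp hq, hQb⟩
    · rintro ⟨s, hs0, hsh, hcong⟩
      exact (hmod m (u₁ - s) hcong).mpr (hblock s hs0 hsh)
  · intro m
    have step : Q' m ↔ Q (m + h) := by
      rw [hnot m, hxor m]
    rw [step]
    constructor
    · intro hq
      obtain ⟨s, hs0, hsh, hcong⟩ :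
          ∃ s : ℤ, 0 ≤ s ∧ s < h ∧ m + h ≡ u₁ - s [ZMOD (2 * h : ℤ)] := by
        set s := (u₁ - (m + h)) % (2 * h) with hs
        have hs0 : 0 ≤ s := Int.emod_nonneg _ (by omega)
        have hlt2 : s < 2 * h := Int.emod_lt_of_pos _ hN
        have hcong : m + h ≡ u₁ - s [ZMOD (2 * h : ℤ)] := by
          rw [Int.modEq_iff_dvd]
          refine ⟨(u₁ - (m + h)) / (2 * h), ?_⟩
          have hed := Int.emod_def (u₁ - (m + h)) (2 * h)
          rw [hs]; linarith
        refine ⟨s, hs0, ?_, hcong⟩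
        by_contra hge
        push_neg at hge
        have hQb : Q (u₁ - (s - h)) := hblock (s - h) (by omega) (by omega)
        have e : u₁ - (s - h) = (u₁ - s) + h := by ring
        rw [e] at hQb
        exact hanti (u₁ - s) ⟨(hmod (m + h) (u₁ - s) hcong).mp hq, hQb⟩
      refine ⟨s, hs0, hsh, ?_⟩
      have h1 : m ≡ u₁ - s - h [ZMOD (2 * h : ℤ)] := by
        have := hcong.sub_right (h : ℤ)
        rwa [add_sub_cancel_right] at this
      exact h1.trans (Int.modEq_iff_dvd.mpr ⟨1, by ring⟩)
    · rintro ⟨s, hs0, hsh, hcong⟩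
      have hcong2 : m + h ≡ u₁ - s [ZMOD (2 * h : ℤ)] := by
        have h1 : m + h ≡ u₁ + h - s + h [ZMOD (2 * h : ℤ)] := hcong.add_right (h : ℤ)
        exact h1.trans (Int.modEq_iff_dvd.mpr ⟨-1, by ring⟩)
      exact (hmod (m + h) (u₁ - s) hcong2).mpr (hblock s hs0 hsh)


/-- If two affine hyperplanes `H₁, H₂`, neither through the origin nor through any point
of `P`, are such that every segment from the origin to a point of `P` meets `H₁ ∪ H₂`,
then there is a tuple `(u_1,…,u_k) ∈ {1,…,n}^k` with: the points of `P` whose segment to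
the origin meets `H₁` are exactly `P(u_1,…,u_k)`, and those whose segment meets `H₂` are
exactly `P(u'_1,…,u'_k)`. -/
theorem separating_pairs_structure (n k : ℕ) (hn : 4 ≤ n) (hneven : Even n) (hk : 1 ≤ k)
    (a₁ a₂ : EuclideanSpace ℝ (Fin (2 * k))) (b₁ b₂ : ℝ)
    (ha₁ : a₁ ≠ 0) (ha₂ : a₂ ≠ 0)
    (h0 : (0 : EuclideanSpace ℝ (Fin (2 * k))) ∉ hyp a₁ b₁ ∪ hyp a₂ b₂)
    (hP : ∀ p ∈ scafSet n k, p ∉ hyp a₁ b₁ ∪ hyp a₂ b₂)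
    (hsep : ∀ p ∈ scafSet n k,
      (segment ℝ 0 p ∩ (hyp a₁ b₁ ∪ hyp a₂ b₂)).Nonempty) :
    ∃ U : Fin k → ℕ, (∀ m, U m ∈ Finset.Icc 1 n) ∧
      {p ∈ scafSet n k | (segment ℝ 0 p ∩ hyp a₁ b₁).Nonempty} = scafHalf n k U ∧
      {p ∈ scafSet n k | (segment ℝ 0 p ∩ hyp a₂ b₂).Nonempty} =
        scafHalf n k (fun m => antip n (U m)) := by
  classical
  have hn0 : 0 < n := by omega
  obtain ⟨h, hn2⟩ : ∃ h : ℕ, n = 2 * h := by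
    obtain ⟨r, hr⟩ := hneven
    exact ⟨r, by omega⟩
  have hh : 2 ≤ h := by omega
  have hNh : (n : ℤ) = 2 * (h : ℤ) := by exact_mod_cast hn2
  have hn2' : n / 2 = h := by omega
  -- nonzero offsets
  have hb₁ : b₁ ≠ 0 := by
    intro hb
    exact h0 (Or.inl (by simp [hyp, hb]))
  have hb₂ : b₂ ≠ 0 := by
    intro hb
    exact h0 (Or.inr (by simp [hyp, hb]))
  set c₁ : EuclideanSpace ℝ (Fin (2 * k)) := b₁⁻¹ • a₁ with hc₁
  set c₂ : EuclideanSpace ℝ (Fin (2 * k)) := b₂⁻¹ • a₂ with hc₂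
  have heq₁ : hyp a₁ b₁ = {x | ⟪c₁, x⟫ = 1} := by
    ext x
    simp only [hyp, Set.mem_setOf_eq, hc₁, real_inner_smul_left,
      inv_mul_eq_one₀ hb₁]
    exact comm
  have heq₂ : hyp a₂ b₂ = {x | ⟪c₂, x⟫ = 1} := by
    ext x
    simp only [hyp, Set.mem_setOf_eq, hc₂, real_inner_smul_left,
      inv_mul_eq_one₀ hb₂]
    exact comm
  -- the angle function and coordinate functions
  set θf : ℤ → ℝ := fun m => ((m : ℝ) - 1) * (2 * π) / n with hθf
  have hnR : (n : ℝ) ≠ 0 := Nat.cast_ne_zero.mpr (by omega)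
  have hpi : (h : ℝ) * (2 * π) / n = π := by
    have : (n : ℝ) = 2 * h := by exact_mod_cast hn2
    rw [this]
    have hhR : (h : ℝ) ≠ 0 := Nat.cast_ne_zero.mpr (by omega)
    field_simp
  have hstep : ∀ m e : ℤ, θf (m + e) = θf m + (e : ℝ) * ((2 * π) / n) := by
    intro m e
    simp only [hθf]
    push_cast
    field_simp
    ring
  have h2pn : 0 < (2 * π) / (n : ℝ) := by
    have : (0 : ℝ) < n := by exact_mod_cast hn0
    positivity
  -- generic trig facts
  have trigmod : ∀ (A B : ℝ) (m m' : ℤ), m ≡ m' [ZMOD (n : ℤ)] →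
      A * cos (θf m) + B * sin (θf m) = A * cos (θf m') + B * sin (θf m') := by
    intro A B m m' hmm'
    obtain ⟨j, hj⟩ := Int.modEq_iff_dvd.mp hmm'
    have hθ : θf m' = θf m + (j : ℝ) * (2 * π) := by
      have hm' : (m' : ℝ) = (m : ℝ) + (n : ℝ) * (j : ℝ) := by
        have : (m' : ℤ) = m + (n : ℤ) * j := by omega
        exact_mod_cast this
      simp only [hθf, hm']
      field_simp
      ring
    rw [hθ, Real.cos_add_int_mul_two_pi, Real.sin_add_int_mul_two_pi]
  have triganti : ∀ m : ℤ, θf (m + h) = θf m + π := by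
    intro m
    rw [hstep m (h : ℤ)]
    rw [show ((h : ℤ) : ℝ) = (h : ℝ) by push_cast; ring]
    rw [show (h : ℝ) * ((2 * π) / n) = (h : ℝ) * (2 * π) / n by ring, hpi]
  have trigconv : ∀ (A B : ℝ) (m d e : ℤ), 0 ≤ e → e ≤ d → d < (h : ℤ) →
      1 < A * cos (θf m) + B * sin (θf m) →
      1 < A * cos (θf (m + d)) + B * sin (θf (m + d)) →
      1 < A * cos (θf (m + e)) + B * sin (θf (m + e)) := by
    intro A B m d e he0 hed hdh hm hd
    have heR : (0 : ℝ) ≤ (e : ℝ) := by exact_mod_cast he0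
    have hedR : (e : ℝ) ≤ (d : ℝ) := by exact_mod_cast hed
    have hdhR : (d : ℝ) < (h : ℝ) := by exact_mod_cast hdh
    apply arc_lemma A B (θf m) (θf (m + d)) (θf (m + e))
    · rw [hstep m e]
      nlinarith
    · rw [hstep m e, hstep m d]
      nlinarith
    · rw [hstep m d]
      have h1 : (d : ℝ) * ((2 * π) / n) < (h : ℝ) * ((2 * π) / n) :=
        mul_lt_mul_of_pos_right hdhR h2pn
      have h2 : (h : ℝ) * ((2 * π) / n) = π := by
        rw [← mul_div_assoc]; exact hpi
      linarith
    · exact hm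
    · exact hd
  -- coordinate data
  set f₁ : Fin k → ℤ → ℝ := fun i m =>
    c₁ ⟨2 * (i : ℕ), by have := i.2; omega⟩ * cos (θf m)
    + c₁ ⟨2 * (i : ℕ) + 1, by have := i.2; omega⟩ * sin (θf m) with hf₁
  set f₂ : Fin k → ℤ → ℝ := fun i m =>
    c₂ ⟨2 * (i : ℕ), by have := i.2; omega⟩ * cos (θf m)
    + c₂ ⟨2 * (i : ℕ) + 1, by have := i.2; omega⟩ * sin (θf m) with hf₂
  have ginner₁ : ∀ (i : Fin k) (u : ℕ), ⟪c₁, scafPt n k i u⟫ = f₁ i (u : ℤ) := by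
    intro i u
    rw [inner_scafPt]
    simp only [hf₁, hθf]
    push_cast
    ring
  have ginner₂ : ∀ (i : Fin k) (u : ℕ), ⟪c₂, scafPt n k i u⟫ = f₂ i (u : ℤ) := by
    intro i u
    rw [inner_scafPt]
    simp only [hf₂, hθf]
    push_cast
    ring
  have fmod₁ : ∀ (i : Fin k) (m m' : ℤ), m ≡ m' [ZMOD (n : ℤ)] → f₁ i m = f₁ i m' := by
    intro i m m' hc
    simp only [hf₁]
    exact trigmod _ _ m m' hc
  have fmod₂ : ∀ (i : Fin k) (m m' : ℤ), m ≡ m' [ZMOD (n : ℤ)] → f₂ i m = f₂ i m' := by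
    intro i m m' hc
    simp only [hf₂]
    exact trigmod _ _ m m' hc
  -- representative mod n
  have rep : ∀ m : ℤ, ∃ u : ℕ, (1 ≤ u ∧ u ≤ n) ∧ m ≡ (u : ℤ) [ZMOD (n : ℤ)] := by
    intro m
    have hn0' : (0 : ℤ) < n := by exact_mod_cast hn0
    have he : 0 ≤ (m - 1) % n := Int.emod_nonneg _ (by omega)
    have hl : (m - 1) % n < n := Int.emod_lt_of_pos _ hn0'
    refine ⟨((m - 1) % n).toNat + 1, ⟨by omega, by omega⟩, ?_⟩
    rw [Int.modEq_iff_dvd]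
    refine ⟨-((m - 1) / n), ?_⟩
    have hed := Int.emod_def (m - 1) (n : ℤ)
    have htn : ((((m - 1) % n).toNat : ℤ)) = (m - 1) % n := Int.toNat_of_nonneg he
    push_cast
    rw [htn]
    linarith
  -- membership facts
  have hmem : ∀ (i : Fin k) (u : ℕ), 1 ≤ u → u ≤ n → scafPt n k i u ∈ scafSet n k := by
    intro i u h1 h2
    exact ⟨i, u, Finset.mem_Icc.mpr ⟨h1, h2⟩, rfl⟩
  have hne₁ : ∀ (i : Fin k) (u : ℕ), 1 ≤ u → u ≤ n → ⟪c₁, scafPt n k i u⟫ ≠ 1 := by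
    intro i u h1 h2 hcon
    have := hP _ (hmem i u h1 h2)
    rw [Set.mem_union, not_or, heq₁] at this
    exact this.1 hcon
  have hne₂ : ∀ (i : Fin k) (u : ℕ), 1 ≤ u → u ≤ n → ⟪c₂, scafPt n k i u⟫ ≠ 1 := by
    intro i u h1 h2 hcon
    have := hP _ (hmem i u h1 h2)
    rw [Set.mem_union, not_or, heq₂] at this
    exact this.2 hcon
  -- f values are never 1
  have fne₁ : ∀ (i : Fin k) (m : ℤ), f₁ i m ≠ 1 := by
    intro i m
    obtain ⟨u, ⟨h1, h2⟩, hcong⟩ := rep m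
    rw [fmod₁ i m (u : ℤ) hcong, ← ginner₁]
    exact hne₁ i u h1 h2
  have fne₂ : ∀ (i : Fin k) (m : ℤ), f₂ i m ≠ 1 := by
    intro i m
    obtain ⟨u, ⟨h1, h2⟩, hcong⟩ := rep m
    rw [fmod₂ i m (u : ℤ) hcong, ← ginner₂]
    exact hne₂ i u h1 h2
  -- cover
  have fcov : ∀ (i : Fin k) (m : ℤ), 1 < f₁ i m ∨ 1 < f₂ i m := by
    intro i m
    obtain ⟨u, ⟨h1, h2⟩, hcong⟩ := rep m
    have hs := hsep _ (hmem i u h1 h2)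
    rw [Set.inter_union_distrib_left] at hs
    rcases Set.union_nonempty.mp hs with hs | hs
    · left
      rw [fmod₁ i m (u : ℤ) hcong, ← ginner₁]
      rw [heq₁] at hs
      exact (meets_iff c₁ _ (hne₁ i u h1 h2)).mp hs
    · right
      rw [fmod₂ i m (u : ℤ) hcong, ← ginner₂]
      rw [heq₂] at hs
      exact (meets_iff c₂ _ (hne₂ i u h1 h2)).mp hs
  -- antipodal
  have fanti₁ : ∀ (i : Fin k) (m : ℤ), f₁ i (m + h) = - f₁ i m := by
    intro i m
    simp only [hf₁]
    rw [triganti m, cos_add_pi, sin_add_pi]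
    ring
  have fanti₂ : ∀ (i : Fin k) (m : ℤ), f₂ i (m + h) = - f₂ i m := by
    intro i m
    simp only [hf₂]
    rw [triganti m, cos_add_pi, sin_add_pi]
    ring
  -- apply the combinatorial lemma for each i
  have key : ∀ i : Fin k, ∃ u₁ : ℤ,
      (∀ m : ℤ, 1 < f₁ i m ↔ ∃ s : ℤ, 0 ≤ s ∧ s < h ∧ m ≡ u₁ - s [ZMOD (2 * h : ℤ)]) ∧
      (∀ m : ℤ, 1 < f₂ i m ↔ ∃ s : ℤ, 0 ≤ s ∧ s < h ∧ m ≡ u₁ + h - s [ZMOD (2 * h : ℤ)]) := by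
    intro i
    apply circle_windows h hh (fun m => 1 < f₁ i m) (fun m => 1 < f₂ i m)
    · intro m m' hmm'
      rw [← hNh] at hmm'
      rw [fmod₁ i m m' hmm']
    · exact fcov i
    · intro m ⟨hq1, hq2⟩
      rw [fanti₁ i m] at hq2
      linarith
    · intro m ⟨hq1, hq2⟩
      rw [fanti₂ i m] at hq2
      linarith
    · intro m d e he0 hed hdh hm hd
      exact trigconv _ _ m d e he0 hed hdh hm hd
  choose w hw₁ hw₂ using key
  -- define U
  set U : Fin k → ℕ := fun i => ((w i - 1) % n).toNat + 1 with hU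
  have hUicc : ∀ i : Fin k, 1 ≤ U i ∧ U i ≤ n := by
    intro i
    have hn0' : (0 : ℤ) < n := by exact_mod_cast hn0
    have he : 0 ≤ (w i - 1) % n := Int.emod_nonneg _ (by omega)
    have hl : (w i - 1) % n < n := Int.emod_lt_of_pos _ hn0'
    constructor <;> simp only [hU] <;> omega
  have hUcong : ∀ i : Fin k, (U i : ℤ) ≡ w i [ZMOD (n : ℤ)] := by
    intro i
    rw [Int.modEq_iff_dvd]
    refine ⟨(w i - 1) / n, ?_⟩
    have he : 0 ≤ (w i - 1) % n := Int.emod_nonneg _ (by omega)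
    have hed := Int.emod_def (w i - 1) (n : ℤ)
    have htn : ((((w i - 1) % n).toNat : ℤ)) = (w i - 1) % n := Int.toNat_of_nonneg he
    simp only [hU]
    push_cast
    rw [htn]
    linarith
  have hAcong : ∀ i : Fin k, (antip n (U i) : ℤ) ≡ w i + h [ZMOD (n : ℤ)] := by
    intro i
    have h1 := (hUicc i).1
    have hcast : ((antip n (U i) : ℕ) : ℤ) = ((U i : ℤ) - 1 + h) % n + 1 := by
      simp only [antip, hn2']
      push_cast [Nat.cast_sub h1]
      ring_nf
    rw [hcast]
    have step1 : ((U i : ℤ) - 1 + h) % n + 1 ≡ ((U i : ℤ) - 1 + h) + 1 [ZMOD (n : ℤ)] :=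
      (Int.mod_modEq _ _).add_right 1
    have step2 : ((U i : ℤ) - 1 + h) + 1 = (U i : ℤ) + h := by ring
    rw [step2] at step1
    exact step1.trans ((hUcong i).add_right (h : ℤ))
  refine ⟨U, fun i => Finset.mem_Icc.mpr (hUicc i), ?_, ?_⟩
  · -- the H₁ half
    ext p
    constructor
    · rintro ⟨⟨i, u, hu, rfl⟩, hmeets⟩
      rw [Finset.mem_Icc] at hu
      rw [heq₁] at hmeets
      have hQ : 1 < f₁ i (u : ℤ) := by
        rw [← ginner₁]
        exact (meets_iff c₁ _ (hne₁ i u hu.1 hu.2)).mp hmeets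
      obtain ⟨s, hs0, hsh, hcong⟩ := (hw₁ i (u : ℤ)).mp hQ
      rw [← hNh] at hcong
      refine ⟨i, u, Finset.mem_Icc.mpr hu, ⟨s.toNat, by omega, ?_⟩, rfl⟩
      rw [← Int.natCast_modEq_iff]
      push_cast
      rw [Int.toNat_of_nonneg hs0]
      have : (u : ℤ) + s ≡ (w i - s) + s [ZMOD (n : ℤ)] := hcong.add_right s
      rw [sub_add_cancel] at this
      exact this.trans (hUcong i).symm
    · rintro ⟨i, t, ht, ⟨s, hsh, hmod⟩, rfl⟩
      rw [Finset.mem_Icc] at ht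
      have hcong : (t : ℤ) ≡ w i - (s : ℤ) [ZMOD (n : ℤ)] := by
        have h1 : ((t + s : ℕ) : ℤ) ≡ (U i : ℤ) [ZMOD (n : ℤ)] :=
          Int.natCast_modEq_iff.mpr hmod
        have h2 : (t : ℤ) + s ≡ w i [ZMOD (n : ℤ)] := by
          push_cast at h1
          exact h1.trans (hUcong i)
        have h3 := h2.sub_right (s : ℤ)
        rwa [add_sub_cancel_right] at h3
      rw [hNh] at hcong
      have hQ : 1 < f₁ i (t : ℤ) :=
        (hw₁ i (t : ℤ)).mpr ⟨(s : ℤ), by positivity, by exact_mod_cast (by omega : s < h), hcong⟩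
      refine ⟨⟨i, t, Finset.mem_Icc.mpr ht, rfl⟩, ?_⟩
      rw [heq₁]
      exact (meets_iff c₁ _ (hne₁ i t ht.1 ht.2)).mpr (by rw [ginner₁]; exact hQ)
  · -- the H₂ half
    ext p
    constructor
    · rintro ⟨⟨i, u, hu, rfl⟩, hmeets⟩
      rw [Finset.mem_Icc] at hu
      rw [heq₂] at hmeets
      have hQ : 1 < f₂ i (u : ℤ) := by
        rw [← ginner₂]
        exact (meets_iff c₂ _ (hne₂ i u hu.1 hu.2)).mp hmeets
      obtain ⟨s, hs0, hsh, hcong⟩ := (hw₂ i (u : ℤ)).mp hQ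
      rw [← hNh] at hcong
      refine ⟨i, u, Finset.mem_Icc.mpr hu, ⟨s.toNat, by omega, ?_⟩, rfl⟩
      rw [← Int.natCast_modEq_iff]
      push_cast
      rw [Int.toNat_of_nonneg hs0]
      have : (u : ℤ) + s ≡ (w i + h - s) + s [ZMOD (n : ℤ)] := hcong.add_right s
      rw [sub_add_cancel] at this
      exact this.trans (hAcong i).symm
    · rintro ⟨i, t, ht, ⟨s, hsh, hmod⟩, rfl⟩
      rw [Finset.mem_Icc] at ht
      have hcong : (t : ℤ) ≡ w i + h - (s : ℤ) [ZMOD (n : ℤ)] := by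
        have h1 : ((t + s : ℕ) : ℤ) ≡ (antip n (U i) : ℤ) [ZMOD (n : ℤ)] :=
          Int.natCast_modEq_iff.mpr hmod
        have h2 : (t : ℤ) + s ≡ w i + h [ZMOD (n : ℤ)] := by
          push_cast at h1
          exact h1.trans (hAcong i)
        have h3 := h2.sub_right (s : ℤ)
        rwa [add_sub_cancel_right] at h3
      rw [hNh] at hcong
      have hQ : 1 < f₂ i (t : ℤ) :=
        (hw₂ i (t : ℤ)).mpr ⟨(s : ℤ), by positivity, by exact_mod_cast (by omega : s < h), hcong⟩
      refine ⟨⟨i, t, Finset.mem_Icc.mpr ht, rfl⟩, ?_⟩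
      rw [heq₂]
      exact (meets_iff c₂ _ (hne₂ i t ht.1 ht.2)).mpr (by rw [ginner₂]; exact hQ)
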